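/- For every real parameter a, the function H_a is a first integral of the vector field v_a: for every (r,z) ∈ ℝ², the Fréchet derivative of H_a at (r,z) applied to the vector v_a(r,z) equals 0. -/

import Mathlib

/-- The Hamiltonian `H_a(r,z) = r²(r² + z² + a)`. -/
noncomputable def Ha (a : ℝ) : ℝ × ℝ → ℝ :=
  fun p => p.1 ^ 2 * (p.1 ^ 2 + p.2 ^ 2 + a)

/-- The vector field `v_a(r,z) = (−2rz, 2(2r² + z² + a))`. -/
noncomputable def vA (a : ℝ) : ℝ × ℝ → ℝ × ℝ :=
  fun p => (-2 * p.1 * p.2, 2 * (2 * p.1 ^ 2 + p.2 ^ 2 + a))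

/-- `H_a` is a first integral of `v_a`: the Fréchet derivative of `H_a` at any point,
applied to `v_a` at that point, vanishes. -/
theorem stmt1 (a : ℝ) (p : ℝ × ℝ) :
    fderiv ℝ (Ha a) p (vA a p) = 0 := by
  have h1 : HasFDerivAt (fun p : ℝ × ℝ => p.1)
      (ContinuousLinearMap.fst ℝ ℝ ℝ) p := hasFDerivAt_fst
  have h2 : HasFDerivAt (fun p : ℝ × ℝ => p.2)
      (ContinuousLinearMap.snd ℝ ℝ ℝ) p := hasFDerivAt_snd
  have h := (h1.mul h1).mul (((h1.mul h1).add (h2.mul h2)).add_const a)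
  have hH : Ha a = fun p : ℝ × ℝ => p.1 * p.1 * (p.1 * p.1 + p.2 * p.2 + a) := by
    funext q; simp [Ha]; ring
  rw [hH, HasFDerivAt.fderiv (f := fun p : ℝ × ℝ => p.1 * p.1 * (p.1 * p.1 + p.2 * p.2 + a)) h]
  simp [vA, ContinuousLinearMap.add_apply, ContinuousLinearMap.smul_apply]
  ring
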